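/- Let τ > 0, let X be a real Banach space and U a real separable Hilbert space, and let B : U → X be a bounded linear operator. Let R(t,s) ∈ L(X), for 0 ≤ s ≤ t ≤ τ, be a family of bounded linear operators such that (t,s) ↦ R(t,s)x is continuous for every x ∈ X, (t,s) ↦ R(t,s) is continuous in the operator norm on the set {(t,s) : 0 ≤ s < t ≤ τ}, and R(t,s) is a compact operator whenever t − s > 0. Then for every t ∈ (0,τ], the bounded linear operator Φ_t : L²([0,τ];U) → X defined by Φ_t(g) = ∫₀ᵗ R(t,s) B g(s) ds is a compact operator. -/

import Mathlib

open MeasureTheory Set Metric Pointwise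
open scoped ENNReal NNReal

section Helpers

variable {X : Type*} [NormedAddCommGroup X] [NormedSpace ℝ X] [CompleteSpace X]

/-- Hölder: `∫_A ‖g‖ ≤ √(μ A) * ‖g‖₂` for `g ∈ L²`. -/
lemma holder_L2_aux {U : Type*} [NormedAddCommGroup U]
    {μ : Measure ℝ} [IsFiniteMeasure μ]
    (g : Lp U 2 μ) (A : Set ℝ) :
    ∫ s in A, ‖g s‖ ∂μ ≤ Real.sqrt ((μ A).toReal) * ‖g‖ := by
  have hgm : AEStronglyMeasurable (⇑g) (μ.restrict A) := (Lp.aestronglyMeasurable g).restrict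
  have hfin : eLpNorm (⇑g) 2 μ ≠ ⊤ := Lp.eLpNorm_ne_top g
  have h3 := eLpNorm_le_eLpNorm_mul_rpow_measure_univ (p := 1) (q := 2) (by norm_num) hgm
  rw [Measure.restrict_apply_univ] at h3
  have hexp : (1 : ℝ) / (1:ℝ≥0∞).toReal - 1 / (2:ℝ≥0∞).toReal = 1/2 := by
    norm_num
  rw [hexp] at h3
  have h4 : eLpNorm (⇑g) 2 (μ.restrict A) ≤ eLpNorm (⇑g) 2 μ :=
    eLpNorm_mono_measure _ Measure.restrict_le_self
  have h5 : eLpNorm (⇑g) 1 (μ.restrict A) ≤ eLpNorm (⇑g) 2 μ * μ A ^ ((1:ℝ)/2) :=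
    h3.trans (by gcongr)
  have h0 : ∫ s in A, ‖g s‖ ∂μ = (eLpNorm (⇑g) 1 (μ.restrict A)).toReal := by
    rw [eLpNorm_one_eq_lintegral_enorm, integral_norm_eq_lintegral_enorm hgm]
  rw [h0, Lp.norm_def]
  have hne : eLpNorm (⇑g) 2 μ * μ A ^ ((1:ℝ)/2) ≠ ⊤ := by
    apply ENNReal.mul_ne_top hfin
    exact (ENNReal.rpow_lt_top_of_nonneg (by norm_num) (measure_ne_top μ A)).ne
  calc (eLpNorm (⇑g) 1 (μ.restrict A)).toReal
      ≤ (eLpNorm (⇑g) 2 μ * μ A ^ ((1:ℝ)/2)).toReal := ENNReal.toReal_mono hne h5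
    _ = Real.sqrt ((μ A).toReal) * (eLpNorm (⇑g) 2 μ).toReal := by
        rw [ENNReal.toReal_mul, mul_comm]
        congr 1
        rw [← ENNReal.toReal_rpow, Real.sqrt_eq_rpow]

/-- The union of images of the closed unit ball under a norm-compact family of compact
operators is totally bounded. -/
lemma tb_union_aux {Q : Set (X →L[ℝ] X)} (hQ : IsCompact Q)
    (hc : ∀ T ∈ Q, IsCompactOperator T) :
    TotallyBounded (⋃ T ∈ Q, T '' Metric.closedBall (0:X) 1) := by
  rw [Metric.totallyBounded_iff]
  intro δ hδ
  have hδ3 : 0 < δ/3 := by linarith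
  obtain ⟨F, hFQ, hcover⟩ := hQ.elim_nhds_subcover (fun T => Metric.ball T (δ/3))
    (fun T _ => Metric.ball_mem_nhds T hδ3)
  have hnet : ∀ T : X →L[ℝ] X, ∃ G : Set X, G.Finite ∧
      (T ∈ Q → (T '' Metric.closedBall (0:X) 1) ⊆ ⋃ y ∈ G, Metric.ball y (δ/3)) := by
    intro T
    by_cases hT : T ∈ Q
    · obtain ⟨K, hK, hKsub⟩ := IsCompactOperator.image_closedBall_subset_compact
        (𝕜₁ := ℝ) (f := (T : X →ₗ[ℝ] X)) (hc T hT) 1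
      obtain ⟨G, hGfin, hGsub⟩ := (Metric.totallyBounded_iff.1 hK.totallyBounded) (δ/3) hδ3
      refine ⟨G, hGfin, fun _ z hz => hGsub (hKsub ?_)⟩
      simpa using hz
    · exact ⟨∅, Set.finite_empty, fun h => absurd h hT⟩
  choose G hGfin hGsub using hnet
  refine ⟨⋃ T ∈ F, G T, Set.Finite.biUnion F.finite_toSet (fun T _ => hGfin T), ?_⟩
  rintro z hz
  simp only [Set.mem_iUnion] at hz
  obtain ⟨T', hT', x, hx, rfl⟩ := hz
  have := hcover hT'
  simp only [Set.mem_iUnion] at this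
  obtain ⟨T, hTF, hball⟩ := this
  have hTQ : T ∈ Q := hFQ T hTF
  have hTx : T x ∈ ⋃ y ∈ G T, Metric.ball y (δ/3) :=
    hGsub T hTQ ⟨x, hx, rfl⟩
  simp only [Set.mem_iUnion] at hTx
  obtain ⟨y, hyG, hy⟩ := hTx
  simp only [Set.mem_iUnion]
  refine ⟨y, ⟨T, hTF, hyG⟩, ?_⟩
  have hxn : ‖x‖ ≤ 1 := by simpa using hx
  have h1 : dist (T' x) (T x) ≤ dist T' T := by
    rw [dist_eq_norm, dist_eq_norm]
    calc ‖T' x - T x‖ = ‖(T' - T) x‖ := by simp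
      _ ≤ ‖T' - T‖ * ‖x‖ := (T' - T).le_opNorm x
      _ ≤ ‖T' - T‖ * 1 := by
          have : (0:ℝ) ≤ ‖T' - T‖ := norm_nonneg _
          nlinarith
      _ = ‖T' - T‖ := mul_one _
  have h2 : dist T' T < δ/3 := by simpa [Metric.mem_ball] using hball
  have h3 : dist (T x) y < δ/3 := by simpa [Metric.mem_ball] using hy
  have := dist_triangle (T' x) (T x) y
  calc dist (T' x) y ≤ dist (T' x) (T x) + dist (T x) y := dist_triangle _ _ _
    _ < δ := by linarith

/-- scaling membership -/
lemma smul_mem_smul_of_le {D : Set X} (hD : Convex ℝ D) (h0 : (0:X) ∈ D)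
    {c C : ℝ} (hc : 0 ≤ c) (hcC : c ≤ C) {d : X} (hd : d ∈ D) :
    c • d ∈ C • D := by
  rcases eq_or_lt_of_le (hc.trans hcC) with hC | hC
  · have hc0 : c = 0 := le_antisymm (hcC.trans hC.symm.le) hc
    rw [hc0, zero_smul, ← hC]
    simpa using Set.smul_mem_smul_set (a := (0:ℝ)) h0
  · have hmem : (c / C) • d ∈ D := by
      have := hD hd h0 (b := 1 - c / C) (div_nonneg hc hC.le)
        (sub_nonneg.2 ((div_le_one hC).2 hcC)) (by ring)
      simpa using this
    have : C • ((c / C) • d) = c • d := by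
      rw [smul_smul]; congr 1; field_simp
    rw [← this]
    exact Set.smul_mem_smul_set hmem

end Helpers

/-- For every `t ∈ (0, τ]`, the bounded linear operator
`Φ_t : L²([0,τ];U) → X`, `Φ_t g = ∫₀ᵗ R(t,s) B g(s) ds`, is a compact operator. -/
theorem stmt_0
    {X U : Type*} [NormedAddCommGroup X] [NormedSpace ℝ X] [CompleteSpace X]
    [NormedAddCommGroup U] [InnerProductSpace ℝ U] [CompleteSpace U]
    [TopologicalSpace.SeparableSpace U]
    (τ : ℝ) (hτ : 0 < τ)
    (B : U →L[ℝ] X)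
    (R : ℝ → ℝ → X →L[ℝ] X)
    -- strong continuity of (t,s) ↦ R(t,s)x on the triangle 0 ≤ s ≤ t ≤ τ
    (hR_strong : ∀ x : X, ContinuousOn (fun p : ℝ × ℝ => R p.1 p.2 x)
      {p : ℝ × ℝ | 0 ≤ p.2 ∧ p.2 ≤ p.1 ∧ p.1 ≤ τ})
    -- operator-norm continuity of (t,s) ↦ R(t,s) on {0 ≤ s < t ≤ τ}
    (hR_norm : ContinuousOn (fun p : ℝ × ℝ => R p.1 p.2)
      {p : ℝ × ℝ | 0 ≤ p.2 ∧ p.2 < p.1 ∧ p.1 ≤ τ})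
    -- compactness of R(t,s) for t - s > 0
    (hR_cpt : ∀ t s : ℝ, 0 ≤ s → s < t → t ≤ τ → IsCompactOperator (R t s)) :
    ∀ t : ℝ, 0 < t → t ≤ τ →
      IsCompactOperator
        (fun g : Lp U 2 ((volume : Measure ℝ).restrict (Set.Icc 0 τ)) =>
          ∫ s in Set.Ioc (0:ℝ) t, R t s (B (g s))
            ∂((volume : Measure ℝ).restrict (Set.Icc 0 τ))) := by
  intro t ht htτ
  set μ : Measure ℝ := (volume : Measure ℝ).restrict (Set.Icc 0 τ) with hμdef
  haveI hμfin : IsFiniteMeasure μ := by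
    constructor
    rw [hμdef, Measure.restrict_apply_univ]
    exact measure_Icc_lt_top
  -- strong continuity in s for fixed t
  have hcont_s : ∀ x : X, ContinuousOn (fun s => R t s x) (Set.Icc 0 t) := by
    intro x
    have hmap : Set.MapsTo (fun s : ℝ => ((t : ℝ), s)) (Set.Icc 0 t)
        {p : ℝ × ℝ | 0 ≤ p.2 ∧ p.2 ≤ p.1 ∧ p.1 ≤ τ} :=
      fun s hs => ⟨hs.1, hs.2, htτ⟩
    exact (hR_strong x).comp ((continuous_const.prodMk continuous_id).continuousOn) hmap
  -- uniform bound on ‖R t s‖ for s ∈ [0, t]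
  obtain ⟨M₀, hM₀⟩ : ∃ M₀ : ℝ, ∀ s : Set.Icc (0:ℝ) t, ‖R t s.1‖ ≤ M₀ := by
    apply banach_steinhaus
    intro x
    obtain ⟨C, hC⟩ := IsCompact.exists_bound_of_continuousOn isCompact_Icc (hcont_s x)
    exact ⟨C, fun s => hC s.1 s.2⟩
  set M : ℝ := max M₀ 0 with hMdef
  have hM : ∀ s ∈ Set.Icc (0:ℝ) t, ‖R t s‖ ≤ M := fun s hs =>
    le_trans (hM₀ ⟨s, hs⟩) (le_max_left _ _)
  have hM0 : 0 ≤ M := le_max_right _ _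
  -- measurability of the operator family
  have hΘmeas : AEStronglyMeasurable (fun s => R t s) (μ.restrict (Set.Ioc 0 t)) := by
    have hcont : ContinuousOn (fun s => R t s) (Set.Ioo 0 t) := by
      have hmap : Set.MapsTo (fun s : ℝ => ((t : ℝ), s)) (Set.Ioo 0 t)
          {p : ℝ × ℝ | 0 ≤ p.2 ∧ p.2 < p.1 ∧ p.1 ≤ τ} :=
        fun s hs => ⟨hs.1.le, hs.2, htτ⟩
      exact hR_norm.comp ((continuous_const.prodMk continuous_id).continuousOn) hmap
    have h1 : AEStronglyMeasurable (fun s => R t s) (μ.restrict (Set.Ioo 0 t)) :=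
      hcont.aestronglyMeasurable measurableSet_Ioo
    rwa [Measure.restrict_congr_set Ioo_ae_eq_Ioc] at h1
  -- measurability of the integrand
  have hmeas : ∀ (A : Set ℝ), A ⊆ Set.Ioc 0 t → ∀ g : Lp U 2 μ,
      AEStronglyMeasurable (fun s => R t s (B (g s))) (μ.restrict A) := by
    intro A hA g
    have hBg : AEStronglyMeasurable (fun s => B (g s)) (μ.restrict A) :=
      B.continuous.comp_aestronglyMeasurable ((Lp.aestronglyMeasurable g).restrict)
    have hΘ : AEStronglyMeasurable (fun s => R t s) (μ.restrict A) :=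
      hΘmeas.mono_measure (Measure.restrict_mono hA le_rfl)
    exact (ContinuousLinearMap.apply ℝ X).flip.aestronglyMeasurable_comp₂ hΘ hBg
  -- integrability of ‖g‖
  have hgint : ∀ g : Lp U 2 μ, Integrable (fun s => ‖g s‖) μ := fun g =>
    ((Lp.memLp g).integrable (by norm_num)).norm
  -- integrability of the integrand
  have hint : ∀ (A : Set ℝ), A ⊆ Set.Ioc 0 t → ∀ g : Lp U 2 μ,
      Integrable (fun s => R t s (B (g s))) (μ.restrict A) := by
    intro A hA g
    refine Integrable.mono' (((hgint g).restrict).const_mul (M * ‖B‖)) (hmeas A hA g) ?_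
    have hAm : ∀ᵐ s ∂(μ.restrict A), s ∈ Set.Ioc 0 t := by
      have h1 : ∀ᵐ s ∂(μ.restrict (Set.Ioc 0 t)), s ∈ Set.Ioc 0 t :=
        ae_restrict_mem measurableSet_Ioc
      exact (ae_mono (Measure.restrict_mono hA le_rfl)) h1
    filter_upwards [hAm] with s hs
    calc ‖R t s (B (g s))‖ ≤ ‖R t s‖ * ‖B (g s)‖ := (R t s).le_opNorm _
      _ ≤ M * (‖B‖ * ‖g s‖) := by
          have h1 : ‖R t s‖ ≤ M := hM s ⟨hs.1.le, hs.2⟩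
          have h2 : ‖B (g s)‖ ≤ ‖B‖ * ‖g s‖ := B.le_opNorm _
          have := norm_nonneg (B (g s)); have := norm_nonneg (g s)
          have := norm_nonneg (R t s); have := norm_nonneg B
          nlinarith
      _ = M * ‖B‖ * ‖g s‖ := by ring
  -- pointwise norm bound helper
  have hbound : ∀ (A : Set ℝ), A ⊆ Set.Ioc 0 t → ∀ g : Lp U 2 μ,
      ‖∫ s in A, R t s (B (g s)) ∂μ‖ ≤ M * ‖B‖ * ∫ s in A, ‖g s‖ ∂μ := by
    intro A hA g
    calc ‖∫ s in A, R t s (B (g s)) ∂μ‖ ≤ ∫ s in A, ‖R t s (B (g s))‖ ∂μ :=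
          norm_integral_le_integral_norm _
      _ ≤ ∫ s in A, M * ‖B‖ * ‖g s‖ ∂μ := by
          refine integral_mono_of_nonneg (Filter.Eventually.of_forall fun s => norm_nonneg _)
            (((hgint g).restrict).const_mul (M * ‖B‖)) ?_
          have hAm : ∀ᵐ s ∂(μ.restrict A), s ∈ Set.Ioc 0 t :=
            (ae_mono (Measure.restrict_mono hA le_rfl)) (ae_restrict_mem measurableSet_Ioc)
          filter_upwards [hAm] with s hs
          calc ‖R t s (B (g s))‖ ≤ ‖R t s‖ * ‖B (g s)‖ := (R t s).le_opNorm _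
            _ ≤ M * (‖B‖ * ‖g s‖) := by
                have h1 : ‖R t s‖ ≤ M := hM s ⟨hs.1.le, hs.2⟩
                have h2 : ‖B (g s)‖ ≤ ‖B‖ * ‖g s‖ := B.le_opNorm _
                have := norm_nonneg (B (g s)); have := norm_nonneg (g s)
                have := norm_nonneg (R t s); have := norm_nonneg B
                nlinarith
            _ = M * ‖B‖ * ‖g s‖ := by ring
      _ = M * ‖B‖ * ∫ s in A, ‖g s‖ ∂μ := integral_const_mul _ _
  -- the key approximation claim
  have key : ∀ δ : ℝ, 0 < δ → ∃ Kc : Set X, IsCompact Kc ∧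
      ∀ g : Lp U 2 μ, ‖g‖ ≤ 1 →
        ∃ y ∈ Kc, ‖(∫ s in Set.Ioc (0:ℝ) t, R t s (B (g s)) ∂μ) - y‖ ≤ δ := by
    intro δ hδ
    set ε : ℝ := min (t/2) ((δ / (M * ‖B‖ + 1))^2) with hεdef
    have hMB1 : (0:ℝ) < M * ‖B‖ + 1 := by positivity
    have hε0 : 0 < ε := lt_min (by linarith) (by positivity)
    have hεt : ε < t := lt_of_le_of_lt (min_le_left _ _) (by linarith)
    set a : ℝ := t - ε with hadef
    have ha0 : 0 < a := by simp only [hadef]; linarith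
    have hat : a < t := by simp only [hadef]; linarith
    -- the compact family of operators
    have hcontQ : ContinuousOn (fun s => R t s) (Set.Icc 0 a) := by
      have hmap : Set.MapsTo (fun s : ℝ => ((t : ℝ), s)) (Set.Icc 0 a)
          {p : ℝ × ℝ | 0 ≤ p.2 ∧ p.2 < p.1 ∧ p.1 ≤ τ} :=
        fun s hs => ⟨hs.1, lt_of_le_of_lt hs.2 hat, htτ⟩
      exact hR_norm.comp ((continuous_const.prodMk continuous_id).continuousOn) hmap
    set Q : Set (X →L[ℝ] X) := (fun s => R t s) '' Set.Icc 0 a with hQdef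
    have hQ : IsCompact Q := isCompact_Icc.image_of_continuousOn hcontQ
    have hQc : ∀ T ∈ Q, IsCompactOperator T := by
      rintro T ⟨s, hs, rfl⟩
      exact hR_cpt t s hs.1 (lt_of_le_of_lt hs.2 hat) htτ
    set S : Set X := ⋃ T ∈ Q, T '' Metric.closedBall (0:X) 1 with hSdef
    have hStb : TotallyBounded S := tb_union_aux hQ hQc
    set D : Set X := closure (convexHull ℝ S) with hDdef
    have hDconv : Convex ℝ D := (convex_convexHull ℝ S).closure
    have hDclosed : IsClosed D := isClosed_closure
    have hDcpt : IsCompact D :=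
      (totallyBounded_convexHull.2 hStb).closure.isCompact_of_isClosed
        isClosed_closure
    have hSD : S ⊆ D := (subset_convexHull ℝ S).trans subset_closure
    have h0S : (0:X) ∈ S := by
      refine Set.mem_biUnion (Set.mem_image_of_mem _ (?_ : (0:ℝ) ∈ Set.Icc 0 a)) ?_
      · exact ⟨le_refl 0, ha0.le⟩
      · exact ⟨0, Metric.mem_closedBall_self (by norm_num), map_zero _⟩
    have h0D : (0:X) ∈ D := hSD h0S
    set C : ℝ := ‖B‖ * Real.sqrt ((μ (Set.Ioc 0 a)).toReal) with hCdef
    have hC0 : 0 ≤ C := by positivity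
    refine ⟨C • D, hDcpt.smul C, ?_⟩
    intro g hg
    have hIoc_a_sub : Set.Ioc (0:ℝ) a ⊆ Set.Ioc 0 t := Set.Ioc_subset_Ioc le_rfl hat.le
    have hIoc_at_sub : Set.Ioc a t ⊆ Set.Ioc 0 t := Set.Ioc_subset_Ioc ha0.le le_rfl
    -- split the integral
    have hsplit : (∫ s in Set.Ioc (0:ℝ) t, R t s (B (g s)) ∂μ) =
        (∫ s in Set.Ioc (0:ℝ) a, R t s (B (g s)) ∂μ) +
        (∫ s in Set.Ioc a t, R t s (B (g s)) ∂μ) := by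
      rw [← setIntegral_union (Set.Ioc_disjoint_Ioc_of_le le_rfl) measurableSet_Ioc
        (hint _ hIoc_a_sub g) (hint _ hIoc_at_sub g),
        Set.Ioc_union_Ioc_eq_Ioc ha0.le hat.le]
    refine ⟨∫ s in Set.Ioc (0:ℝ) a, R t s (B (g s)) ∂μ, ?_, ?_⟩
    · -- main part belongs to C • D
      set μ' := μ.restrict (Set.Ioc (0:ℝ) a) with hμ'def
      have hBg' : AEStronglyMeasurable (fun s => B (g s)) μ' :=
        B.continuous.comp_aestronglyMeasurable ((Lp.aestronglyMeasurable g).restrict)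
      set ρ : ℝ → ℝ≥0 := fun s => ‖B (g s)‖₊ with hρdef
      have hρmeas : AEMeasurable ρ μ' := hBg'.nnnorm.aemeasurable
      set ν : Measure ℝ := μ'.withDensity (fun s => (ρ s : ℝ≥0∞)) with hνdef
      have hfint : Integrable (fun s => R t s (B (g s))) μ' := hint _ hIoc_a_sub g
      have hBgint : Integrable (fun s => B (g s)) μ' :=
        B.integrable_comp (((Lp.memLp g).integrable (by norm_num)).restrict)
      have hνuniv : ν Set.univ = ∫⁻ s, (ρ s : ℝ≥0∞) ∂μ' := by
        rw [hνdef, withDensity_apply _ MeasurableSet.univ, Measure.restrict_univ]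
      haveI hνfin : IsFiniteMeasure ν := by
        constructor
        rw [hνuniv]
        exact hBgint.2
      set u : ℝ → X := fun s => (‖B (g s)‖)⁻¹ • (R t s (B (g s))) with hudef
      have hu_meas : AEStronglyMeasurable u μ' :=
        AEStronglyMeasurable.smul (hBg'.norm.aemeasurable.inv.aestronglyMeasurable)
          (hmeas _ hIoc_a_sub g)
      have hsmul_u : ∀ s, ρ s • u s = R t s (B (g s)) := by
        intro s
        by_cases h : B (g s) = 0
        · simp [hudef, hρdef, h]
        · have hn : ‖B (g s)‖ ≠ 0 := norm_ne_zero_iff.2 h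
          simp only [hudef, hρdef, NNReal.smul_def, coe_nnnorm, smul_smul]
          rw [mul_inv_cancel₀ hn, one_smul]
      have hIeq : (∫ s in Set.Ioc (0:ℝ) a, R t s (B (g s)) ∂μ) = ∫ s, u s ∂ν := by
        rw [hνdef, integral_withDensity_eq_integral_smul₀ hρmeas u]
        exact (integral_congr_ae (Filter.Eventually.of_forall fun s => (hsmul_u s).symm))
      by_cases hν0 : ν = 0
      · rw [hIeq, hν0, integral_zero_measure]
        exact Set.mem_smul_set.2 ⟨0, h0D, smul_zero C⟩
      · haveI : NeZero ν := ⟨hν0⟩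
        have hu_int : Integrable u ν := by
          rw [hνdef, integrable_withDensity_iff_integrable_smul₀ hρmeas]
          exact hfint.congr (Filter.Eventually.of_forall fun s => (hsmul_u s).symm)
        have hu_mem : ∀ᵐ s ∂ν, u s ∈ D := by
          have h' : ∀ᵐ s ∂μ', u s ∈ D := by
            have := ae_restrict_mem (μ := μ) (s := Set.Ioc (0:ℝ) a) measurableSet_Ioc
            filter_upwards [this] with s hs
            by_cases h : B (g s) = 0
            · simpa [hudef, h] using h0D
            · have hn : ‖B (g s)‖ ≠ 0 := norm_ne_zero_iff.2 h
              have hx : ‖(‖B (g s)‖)⁻¹ • (B (g s))‖ = 1 := by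
                rw [norm_smul, norm_inv, norm_norm, inv_mul_cancel₀ hn]
              have hus : u s = R t s ((‖B (g s)‖)⁻¹ • (B (g s))) := by
                simp [hudef, _root_.map_smul]
              apply hSD
              refine Set.mem_biUnion
                (Set.mem_image_of_mem _ (⟨hs.1.le, hs.2⟩ : s ∈ Set.Icc 0 a)) ?_
              exact ⟨_, by rw [Metric.mem_closedBall, dist_zero_right]; exact le_of_eq hx,
                hus.symm⟩
          exact (withDensity_absolutelyContinuous μ' _).ae_le h'
        have havg : (⨍ s, u s ∂ν) ∈ D := hDconv.average_mem hDclosed hu_mem hu_int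
        set c : ℝ := (ν Set.univ).toReal with hcdef
        have hc0 : 0 ≤ c := ENNReal.toReal_nonneg
        have hcne : c ≠ 0 := by
          refine ENNReal.toReal_ne_zero.2 ⟨?_, measure_ne_top ν _⟩
          exact fun h => hν0 (Measure.measure_univ_eq_zero.1 h)
        have hcC : c ≤ C := by
          have h2 : c = ∫ s, ‖B (g s)‖ ∂μ' := by
            rw [hcdef, hνuniv]; exact (integral_norm_eq_lintegral_enorm hBg').symm
          rw [h2]
          have hH : ∫ s, ‖g s‖ ∂μ' ≤ Real.sqrt ((μ (Set.Ioc 0 a)).toReal) := by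
            have h3 := holder_L2_aux g (Set.Ioc (0:ℝ) a)
            calc ∫ s, ‖g s‖ ∂μ' ≤ Real.sqrt ((μ (Set.Ioc 0 a)).toReal) * ‖g‖ := h3
              _ ≤ Real.sqrt ((μ (Set.Ioc 0 a)).toReal) * 1 :=
                  mul_le_mul_of_nonneg_left hg (Real.sqrt_nonneg _)
              _ = Real.sqrt ((μ (Set.Ioc 0 a)).toReal) := mul_one _
          calc ∫ s, ‖B (g s)‖ ∂μ' ≤ ∫ s, ‖B‖ * ‖g s‖ ∂μ' := by
                refine integral_mono_of_nonneg
                  (Filter.Eventually.of_forall fun s => norm_nonneg _)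
                  (((hgint g).restrict).const_mul ‖B‖)
                  (Filter.Eventually.of_forall fun s => B.le_opNorm _)
            _ = ‖B‖ * ∫ s, ‖g s‖ ∂μ' := integral_const_mul _ _
            _ ≤ ‖B‖ * Real.sqrt ((μ (Set.Ioc 0 a)).toReal) :=
                mul_le_mul_of_nonneg_left hH (norm_nonneg B)
            _ = C := hCdef.symm
        have hceq : (∫ s, u s ∂ν) = c • ⨍ s, u s ∂ν := by
          rw [average_eq, measureReal_def, ← hcdef, smul_smul, mul_inv_cancel₀ hcne, one_smul]
        rw [hIeq, hceq]
        exact smul_mem_smul_of_le hDconv h0D hc0 hcC havg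
    · -- tail estimate
      rw [hsplit]
      simp only [add_sub_cancel_left]
      have h1 := hbound _ hIoc_at_sub g
      have h2 : ∫ s in Set.Ioc a t, ‖g s‖ ∂μ ≤
          Real.sqrt ((μ (Set.Ioc a t)).toReal) * ‖g‖ := holder_L2_aux g _
      have hμat : (μ (Set.Ioc a t)).toReal ≤ ε := by
        have hle : μ (Set.Ioc a t) ≤ (volume : Measure ℝ) (Set.Ioc a t) :=
          Measure.restrict_le_self _
        rw [Real.volume_Ioc] at hle
        have := ENNReal.toReal_mono ENNReal.ofReal_ne_top hle
        rw [ENNReal.toReal_ofReal (by linarith : (0:ℝ) ≤ t - a)] at this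
        simpa [hadef] using this
      have hsq : Real.sqrt ((μ (Set.Ioc a t)).toReal) ≤ δ / (M * ‖B‖ + 1) := by
        have h3 : (μ (Set.Ioc a t)).toReal ≤ (δ / (M * ‖B‖ + 1))^2 :=
          hμat.trans (min_le_right _ _)
        calc Real.sqrt ((μ (Set.Ioc a t)).toReal) ≤
            Real.sqrt ((δ / (M * ‖B‖ + 1))^2) := Real.sqrt_le_sqrt h3
          _ = δ / (M * ‖B‖ + 1) := Real.sqrt_sq (by positivity)
      have hnormg : (0:ℝ) ≤ ∫ s in Set.Ioc a t, ‖g s‖ ∂μ :=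
        integral_nonneg fun s => norm_nonneg _
      have hsqrt_nonneg : (0:ℝ) ≤ Real.sqrt ((μ (Set.Ioc a t)).toReal) := Real.sqrt_nonneg _
      calc ‖∫ s in Set.Ioc a t, R t s (B (g s)) ∂μ‖
          ≤ M * ‖B‖ * ∫ s in Set.Ioc a t, ‖g s‖ ∂μ := h1
        _ ≤ M * ‖B‖ * (δ / (M * ‖B‖ + 1)) := by
            have h3 : ∫ s in Set.Ioc a t, ‖g s‖ ∂μ ≤ δ / (M * ‖B‖ + 1) := by
              calc ∫ s in Set.Ioc a t, ‖g s‖ ∂μ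
                  ≤ Real.sqrt ((μ (Set.Ioc a t)).toReal) * ‖g‖ := h2
                _ ≤ Real.sqrt ((μ (Set.Ioc a t)).toReal) * 1 :=
                    mul_le_mul_of_nonneg_left hg hsqrt_nonneg
                _ = Real.sqrt ((μ (Set.Ioc a t)).toReal) := mul_one _
                _ ≤ δ / (M * ‖B‖ + 1) := hsq
            exact mul_le_mul_of_nonneg_left h3 (by positivity)
        _ ≤ δ := by
            have h4 : M * ‖B‖ ≤ M * ‖B‖ + 1 := by linarith
            calc M * ‖B‖ * (δ / (M * ‖B‖ + 1))
                ≤ (M * ‖B‖ + 1) * (δ / (M * ‖B‖ + 1)) :=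
                  mul_le_mul_of_nonneg_right h4 (by positivity)
              _ = δ := by field_simp
  -- assemble: totally bounded image of the unit ball
  set Φ := fun g : Lp U 2 μ => ∫ s in Set.Ioc (0:ℝ) t, R t s (B (g s)) ∂μ with hΦdef
  have htb : TotallyBounded (Φ '' Metric.closedBall 0 1) := by
    rw [Metric.totallyBounded_iff]
    intro ε' hε'
    obtain ⟨Kc, hKc, happ⟩ := key (ε'/3) (by linarith)
    obtain ⟨G, hGfin, hGsub⟩ := Metric.totallyBounded_iff.1 hKc.totallyBounded (ε'/3)
      (by linarith)
    refine ⟨G, hGfin, ?_⟩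
    rintro z ⟨g, hg, rfl⟩
    obtain ⟨y, hyK, hy⟩ := happ g (mem_closedBall_zero_iff.1 hg)
    have hyG := hGsub hyK
    simp only [Set.mem_iUnion] at hyG
    obtain ⟨w, hwG, hyw⟩ := hyG
    simp only [Set.mem_iUnion]
    refine ⟨w, hwG, ?_⟩
    have h1 : dist (Φ g) y ≤ ε'/3 := by rw [dist_eq_norm]; exact hy
    have h2 : dist y w < ε'/3 := by simpa [Metric.mem_ball] using hyw
    calc dist (Φ g) w ≤ dist (Φ g) y + dist y w := dist_triangle _ _ _
      _ < ε' := by linarith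
  have hKcl : IsCompact (closure (Φ '' Metric.closedBall 0 1)) :=
    htb.closure.isCompact_of_isClosed isClosed_closure
  exact ⟨_, hKcl, Filter.mem_of_superset (Metric.closedBall_mem_nhds 0 one_pos)
    (fun g hg => subset_closure (Set.mem_image_of_mem _ hg))⟩
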